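/- Let (R, m) be a commutative noetherian local ring and I an ideal of R. (a) If (M_λ)_{λ∈Λ} is a family of I-excellent R-modules, then the direct product ∏_λ M_λ and the direct sum ⊕_λ M_λ are I-excellent. (b) If M is an I-excellent R-module and U ⊆ M is a pure submodule (i.e. for every R-module N the induced map N ⊗_R U → N ⊗_R M is injective), then U is I-excellent. -/

import Mathlib

open DirectSum

open TensorProduct in
lemma one_tmul_eq_zero_iff_mem_smul_top {R : Type*} [CommRing R] (I : Ideal R)
    {M : Type*} [AddCommGroup M] [Module R M] (x : M) :
    (1 : R ⧸ I) ⊗ₜ[R] x = 0 ↔ x ∈ I • (⊤ : Submodule R M) := by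
  rw [← (quotTensorEquivQuotSMul M I).map_eq_zero_iff]
  rw [show (1 : R ⧸ I) = Ideal.Quotient.mk I 1 from rfl,
    TensorProduct.quotTensorEquivQuotSMul_mk_tmul, one_smul, Submodule.Quotient.mk_eq_zero]

lemma exists_sum_of_mem_smul_top' {R : Type*} [CommRing R] {I : Ideal R} {s : Finset R}
    (hs : Ideal.span (s : Set R) = I) {M : Type*} [AddCommGroup M] [Module R M] {x : M}
    (hx : x ∈ I • (⊤ : Submodule R M)) : ∃ c : R → M, x = ∑ a ∈ s, a • c a := by
  refine Submodule.smul_induction_on hx ?_ ?_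
  · intro r hr m _
    rw [← hs] at hr
    obtain ⟨f, -, hf⟩ := Submodule.mem_span_finset.1 hr
    refine ⟨fun a => f a • m, ?_⟩
    rw [← hf, Finset.sum_smul]
    refine Finset.sum_congr rfl fun a _ => ?_
    rw [smul_eq_mul, mul_smul]
    exact smul_comm _ _ _
  · rintro x y ⟨c₁, rfl⟩ ⟨c₂, rfl⟩
    exact ⟨c₁ + c₂, by simp [Finset.sum_add_distrib, smul_add]⟩

lemma smul_top_le_iSup_range {R : Type*} [CommRing R] (I : Ideal R)
    {M : Type*} [AddCommGroup M] [Module R M] :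
    I • (⊤ : Submodule R M) ≤ ⨆ f : I →ₗ[R] M, LinearMap.range f := by
  refine Submodule.smul_le.2 fun r hr m _ => ?_
  refine le_iSup (fun f : I →ₗ[R] M => LinearMap.range f)
    ((LinearMap.toSpanSingleton R M m).comp I.subtype) ⟨⟨r, hr⟩, rfl⟩

/-- Folgerung 1.4: The family of `I`-excellent modules (those with `I•M = γ_I(M)`) is closed
under direct products, direct sums, and pure submodules. -/
theorem iExcellent_closure {R : Type u} [CommRing R] [IsNoetherianRing R] [IsLocalRing R]
    (I : Ideal R) {Λ : Type u} (M : Λ → Type u)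
    [∀ l, AddCommGroup (M l)] [∀ l, Module R (M l)]
    (hM : ∀ l, I • (⊤ : Submodule R (M l)) = ⨆ f : I →ₗ[R] M l, LinearMap.range f)
    (N : Type u) [AddCommGroup N] [Module R N]
    (hN : I • (⊤ : Submodule R N) = ⨆ f : I →ₗ[R] N, LinearMap.range f)
    (U : Submodule R N)
    (hU : ∀ (P : Type u) [AddCommGroup P] [Module R P],
      Function.Injective (LinearMap.lTensor P U.subtype)) :
    (I • (⊤ : Submodule R (∀ l, M l)) = ⨆ f : I →ₗ[R] (∀ l, M l), LinearMap.range f) ∧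
    (I • (⊤ : Submodule R (⨁ l, M l)) = ⨆ f : I →ₗ[R] (⨁ l, M l), LinearMap.range f) ∧
    (I • (⊤ : Submodule R U) = ⨆ f : I →ₗ[R] U, LinearMap.range f) := by
  classical
  obtain ⟨s, hs⟩ : I.FG := IsNoetherian.noetherian I
  refine ⟨?_, ?_, ?_⟩
  · refine le_antisymm (smul_top_le_iSup_range I) (iSup_le fun f => ?_)
    rintro _ ⟨i, rfl⟩
    have h : ∀ l, f i l ∈ I • (⊤ : Submodule R (M l)) := by
      intro l
      rw [hM l]
      exact le_iSup (fun g : I →ₗ[R] M l => LinearMap.range g)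
        ((LinearMap.proj l).comp f) ⟨i, rfl⟩
    choose c hc using fun l => exists_sum_of_mem_smul_top' hs (h l)
    have hx : f i = ∑ a ∈ s, a • (fun l => c l a) := by
      funext l
      simp only [Finset.sum_apply, Pi.smul_apply]
      exact hc l
    rw [hx]
    exact Submodule.sum_mem _ fun a ha =>
      Submodule.smul_mem_smul (hs ▸ Ideal.subset_span ha) trivial
  · refine le_antisymm (smul_top_le_iSup_range I) (iSup_le fun f => ?_)
    rintro _ ⟨i, rfl⟩
    rw [← DirectSum.sum_support_of (f i)]
    refine Submodule.sum_mem _ fun l _ => ?_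
    have h : f i l ∈ I • (⊤ : Submodule R (M l)) := by
      rw [hM l]
      exact le_iSup (fun g : I →ₗ[R] M l => LinearMap.range g)
        ((DirectSum.component R Λ M l).comp f) ⟨i, rfl⟩
    have h2 : (DirectSum.of M l) (f i l) ∈
        (I • (⊤ : Submodule R (M l))).map (DirectSum.lof R Λ M l) :=
      Submodule.mem_map_of_mem h
    rw [Submodule.map_smul''] at h2
    exact Submodule.smul_mono le_rfl le_top h2
  · refine le_antisymm (smul_top_le_iSup_range I) (iSup_le fun f => ?_)
    rintro _ ⟨i, rfl⟩
    have h : (f i : N) ∈ I • (⊤ : Submodule R N) := by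
      rw [hN]
      exact le_iSup (fun g : I →ₗ[R] N => LinearMap.range g) (U.subtype.comp f) ⟨i, rfl⟩
    rw [← one_tmul_eq_zero_iff_mem_smul_top]
    apply hU (R ⧸ I)
    rw [map_zero, LinearMap.lTensor_tmul]
    exact (one_tmul_eq_zero_iff_mem_smul_top I (f i : N)).2 h
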